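/- arXiv:1603.05456 — 3 statements merged into one kernel-verified Lean document; each statement's English description precedes it below -/
import Mathlib

section
/- Let n ≥ 2 be a natural number, U ⊆ EuclideanSpace ℝ (Fin n) a nonempty open connected set, and f : EuclideanSpace ℝ (Fin n) → ℝ a C² function satisfying, for every x ∈ U and all v, w, the flat Miao–Tam equation Hess f(x)(v, w) − Δf(x)·⟪v, w⟫ = ⟪v, w⟫. Then there exist a ∈ EuclideanSpace ℝ (Fin n) and c ∈ ℝ such that f(x) = c − ‖x − a‖²/(2(n−1)) for all x ∈ U. -/
open RealInnerProductSpace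

/-- The Hessian of `f` at `x`, as a bilinear form: the second Fréchet derivative. -/
noncomputable def Hess {n : ℕ} (f : EuclideanSpace ℝ (Fin n) → ℝ)
    (x v w : EuclideanSpace ℝ (Fin n)) : ℝ :=
  iteratedFDeriv ℝ 2 f x ![v, w]

/-- The Laplacian of `f` at `x`: the trace of the Hessian with respect to the
standard orthonormal basis of Euclidean space. -/
noncomputable def lap {n : ℕ} (f : EuclideanSpace ℝ (Fin n) → ℝ)
    (x : EuclideanSpace ℝ (Fin n)) : ℝ :=
  ∑ i : Fin n, Hess f x (EuclideanSpace.single i 1) (EuclideanSpace.single i 1)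

/-- A function with zero derivative on an open preconnected set is constant there. -/
lemma const_on_of_fderiv_zero {E F : Type*} [NormedAddCommGroup E] [NormedSpace ℝ E]
    [NormedAddCommGroup F] [NormedSpace ℝ F] {g : E → F} {U : Set E} (hUo : IsOpen U)
    (hUc : IsPreconnected U) (hg : ∀ x ∈ U, DifferentiableAt ℝ g x)
    (hg' : ∀ x ∈ U, fderiv ℝ g x = 0) {x y : E} (hx : x ∈ U) (hy : y ∈ U) :
    g x = g y := by
  have loc : ∀ z ∈ U, ∃ ε > 0, Metric.ball z ε ⊆ U ∧ ∀ w ∈ Metric.ball z ε, g w = g z := by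
    intro z hz
    obtain ⟨ε, hε, hball⟩ := Metric.isOpen_iff.1 hUo z hz
    refine ⟨ε, hε, hball, fun w hw => ?_⟩
    refine (convex_ball z ε).is_const_of_fderivWithin_eq_zero
      (fun u hu => (hg u (hball hu)).differentiableWithinAt)
      (fun u hu => ?_) hw (Metric.mem_ball_self hε)
    rw [fderivWithin_of_isOpen Metric.isOpen_ball hu]
    exact hg' u (hball hu)
  by_contra hne
  set A : Set E := {z | z ∈ U ∧ g z = g x} with hA
  set B : Set E := {z | z ∈ U ∧ g z ≠ g x} with hB
  have hAo : IsOpen A := by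
    rw [Metric.isOpen_iff]
    rintro z ⟨hzU, hzg⟩
    obtain ⟨ε, hε, hball, hconst⟩ := loc z hzU
    exact ⟨ε, hε, fun w hw => ⟨hball hw, (hconst w hw).trans hzg⟩⟩
  have hBo : IsOpen B := by
    rw [Metric.isOpen_iff]
    rintro z ⟨hzU, hzg⟩
    obtain ⟨ε, hε, hball, hconst⟩ := loc z hzU
    exact ⟨ε, hε, fun w hw => ⟨hball hw, by rw [hconst w hw]; exact hzg⟩⟩
  have := hUc A B hAo hBo
    (fun z hz => by by_cases h : g z = g x
                    exacts [Or.inl ⟨hz, h⟩, Or.inr ⟨hz, h⟩])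
    ⟨x, hx, hx, rfl⟩ ⟨y, hy, hy, fun h => hne h.symm⟩
  obtain ⟨z, _, ⟨_, h1⟩, ⟨_, h2⟩⟩ := this
  exact h2 h1

/-- A `C²` solution of the flat Miao–Tam equation `Hess f − (Δf) g = g` on a nonempty
open connected set is, up to translation and additive constant, the model quadratic
potential: `f(x) = c − ‖x − a‖²/(2(n−1))`. -/
theorem stmt_6 (n : ℕ) (hn : 2 ≤ n) (U : Set (EuclideanSpace ℝ (Fin n)))
    (hUo : IsOpen U) (hUne : U.Nonempty) (hUc : IsConnected U)
    (f : EuclideanSpace ℝ (Fin n) → ℝ) (hf : ContDiff ℝ 2 f)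
    (heq : ∀ x ∈ U, ∀ v w : EuclideanSpace ℝ (Fin n),
      Hess f x v w - lap f x * ⟪v, w⟫ = ⟪v, w⟫) :
    ∃ (a : EuclideanSpace ℝ (Fin n)) (c : ℝ),
      ∀ x ∈ U, f x = c - ‖x - a‖ ^ 2 / (2 * ((n : ℝ) - 1)) := by
  have hn2 : (2 : ℝ) ≤ (n : ℝ) := by exact_mod_cast hn
  have hn1 : (1 - (n : ℝ)) ≠ 0 := by linarith
  set κ : ℝ := (1 - (n : ℝ))⁻¹ with hκdef
  have hκ0 : κ ≠ 0 := inv_ne_zero hn1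
  have hκ1 : κ * (1 - (n : ℝ)) = 1 := inv_mul_cancel₀ hn1
  -- Step 1: the Laplacian is constant  n·κ  on U, and Hess = κ·inner.
  have hHess : ∀ x ∈ U, ∀ v w, Hess f x v w = κ * ⟪v, w⟫ := by
    intro x hx v w
    have hlap : lap f x = (n : ℝ) * κ := by
      have h := fun i : Fin n => heq x hx (EuclideanSpace.single i 1) (EuclideanSpace.single i 1)
      have hone : ∀ i : Fin n,
          ⟪(EuclideanSpace.single i 1 : EuclideanSpace ℝ (Fin n)),
            EuclideanSpace.single i 1⟫ = (1 : ℝ) := by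
        intro i; simp [EuclideanSpace.inner_single_left]
      have hsum : lap f x = ∑ _i : Fin n, (1 + lap f x) := by
        conv_lhs => rw [lap]
        refine Finset.sum_congr rfl fun i _ => ?_
        have := h i; rw [hone i] at this; linarith
      rw [Finset.sum_const, Finset.card_univ, Fintype.card_fin, nsmul_eq_mul] at hsum
      have : lap f x * (1 - (n : ℝ)) = (n : ℝ) := by ring_nf; ring_nf at hsum; linarith
      rw [hκdef, eq_mul_inv_iff_mul_eq₀ hn1]
      linarith [this]
    have h := heq x hx v w
    rw [hlap] at h
    have hc : (1 : ℝ) + (n : ℝ) * κ = κ := by nlinarith [hκ1]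
    have h2 : Hess f x v w = (1 + (n : ℝ) * κ) * ⟪v, w⟫ := by ring_nf; ring_nf at h; linarith
    rw [h2, hc]
  -- Differentiability facts
  have hf1 : Differentiable ℝ f := hf.differentiable (by norm_num)
  have hfC1 : ContDiff ℝ 1 (fderiv ℝ f) := hf.fderiv_right (by norm_num)
  have hDf : Differentiable ℝ (fderiv ℝ f) := hfC1.differentiable one_ne_zero
  have hHess' : ∀ x ∈ U, ∀ v w, fderiv ℝ (fderiv ℝ f) x v w = κ * ⟪v, w⟫ := by
    intro x hx v w
    have := hHess x hx v w
    rw [Hess, iteratedFDeriv_two_apply] at this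
    simpa using this
  obtain ⟨x₀, hx₀⟩ := hUne
  -- Step 2: for each v, the function x ↦ f'(x)v − κ⟪v,x⟫ is constant on U.
  have key : ∀ v, ∀ x ∈ U, fderiv ℝ f x v - κ * ⟪v, x⟫
      = fderiv ℝ f x₀ v - κ * ⟪v, x₀⟫ := by
    intro v x hx
    set g : EuclideanSpace ℝ (Fin n) → ℝ :=
      fun y => fderiv ℝ f y v - κ * (innerSL ℝ v) y with hg
    have hder : ∀ z ∈ U, HasFDerivAt g (0 : EuclideanSpace ℝ (Fin n) →L[ℝ] ℝ) z := by
      intro z hz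
      have h1 : HasFDerivAt (fun y => fderiv ℝ f y v)
          ((ContinuousLinearMap.apply ℝ ℝ v).comp (fderiv ℝ (fderiv ℝ f) z)) z :=
        (ContinuousLinearMap.apply ℝ ℝ v).hasFDerivAt.comp z (hDf z).hasFDerivAt
      have h2 : HasFDerivAt (fun y => κ * (innerSL ℝ v) y) (κ • innerSL ℝ v) z :=
        (innerSL ℝ v).hasFDerivAt.const_mul κ
      have h3 := h1.sub h2
      have hzero : (ContinuousLinearMap.apply ℝ ℝ v).comp (fderiv ℝ (fderiv ℝ f) z)
          - κ • innerSL ℝ v = 0 := by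
        ext w
        have := hHess' z hz w v
        simp only [ContinuousLinearMap.coe_comp', Function.comp_apply,
          ContinuousLinearMap.apply_apply, ContinuousLinearMap.sub_apply,
          ContinuousLinearMap.smul_apply, innerSL_apply_apply, ContinuousLinearMap.zero_apply,
          smul_eq_mul]
        rw [this, real_inner_comm]
        ring
      rwa [hzero] at h3
    have := const_on_of_fderiv_zero hUo hUc.isPreconnected
      (fun z hz => (hder z hz).differentiableAt)
      (fun z hz => (hder z hz).fderiv) hx hx₀
    simpa [hg, innerSL_apply_apply] using this
  -- Step 3: choose a and show f'(x) = κ ⟪x − a, ·⟫ on U.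
  set d : EuclideanSpace ℝ (Fin n) :=
    (InnerProductSpace.toDual ℝ (EuclideanSpace ℝ (Fin n))).symm (fderiv ℝ f x₀)
  set a : EuclideanSpace ℝ (Fin n) := x₀ - κ⁻¹ • d with ha
  have hderiv : ∀ x ∈ U, ∀ v, fderiv ℝ f x v = κ * ⟪x - a, v⟫ := by
    intro x hx v
    have h := key v x hx
    have hdL : ⟪d, v⟫ = fderiv ℝ f x₀ v := InnerProductSpace.toDual_symm_apply
    have expand : ⟪x - a, v⟫ = ⟪x, v⟫ - ⟪x₀, v⟫ + κ⁻¹ * ⟪d, v⟫ := by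
      rw [ha]
      rw [inner_sub_left, inner_sub_left, real_inner_smul_left]
      ring
    rw [expand, hdL]
    have h' : fderiv ℝ f x v = fderiv ℝ f x₀ v - κ * ⟪v, x₀⟫ + κ * ⟪v, x⟫ := by linarith
    rw [h', real_inner_comm v x, real_inner_comm v x₀]
    field_simp
    ring
  -- Step 4: f − (κ/2)‖·−a‖² is constant on U.
  set φ : EuclideanSpace ℝ (Fin n) → ℝ := fun x => f x - (κ / 2) * ‖x - a‖ ^ 2 with hφ
  have hφder : ∀ x ∈ U, HasFDerivAt φ (0 : EuclideanSpace ℝ (Fin n) →L[ℝ] ℝ) x := by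
    intro x hx
    have h1 : HasFDerivAt (fun y : EuclideanSpace ℝ (Fin n) => ‖y - a‖ ^ 2)
        (2 • (innerSL ℝ (x - a)).comp (ContinuousLinearMap.id ℝ _)) x := by
      have := ((hasFDerivAt_id x).sub_const a).norm_sq
      simpa using this
    have h2 := h1.const_mul (κ / 2)
    have h3 := (hf1 x).hasFDerivAt.sub h2
    have hzero : fderiv ℝ f x - (κ / 2) • (2 • (innerSL ℝ (x - a)).comp
        (ContinuousLinearMap.id ℝ _)) = 0 := by
      ext w
      simp only [ContinuousLinearMap.sub_apply, ContinuousLinearMap.smul_apply,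
        ContinuousLinearMap.coe_comp', Function.comp_apply, ContinuousLinearMap.coe_id',
        id_eq, innerSL_apply_apply, ContinuousLinearMap.zero_apply, smul_eq_mul]
      rw [hderiv x hx w]
      ring
    rwa [hzero] at h3
  have hconst : ∀ x ∈ U, φ x = φ x₀ := fun x hx =>
    const_on_of_fderiv_zero hUo hUc.isPreconnected
      (fun z hz => (hφder z hz).differentiableAt)
      (fun z hz => (hφder z hz).fderiv) hx hx₀
  refine ⟨a, φ x₀, fun x hx => ?_⟩
  have hcx := hconst x hx
  have hφx : φ x = f x - κ / 2 * ‖x - a‖ ^ 2 := rfl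
  have hm : ((n : ℝ) - 1) ≠ 0 := by linarith
  have hhalf : κ / 2 * ‖x - a‖ ^ 2 = ‖x - a‖ ^ 2 / (2 * ((n : ℝ) - 1)) * (-1) := by
    rw [hκdef, show (1 - (n : ℝ)) = -((n : ℝ) - 1) by ring, inv_neg]
    field_simp
  rw [hφx] at hcx
  rw [← hcx]
  linarith [hhalf]
end

section
/- Let n ≥ 3 be a natural number. Let Ω ⊆ EuclideanSpace ℝ (Fin n) be a compact connected set that equals the closure of its (nonempty) interior, and let f : EuclideanSpace ℝ (Fin n) → ℝ be a C² function such that for every x in Ω and all v, w, Hess f(x)(v, w) − Δf(x)·⟪v, w⟫ = ⟪v, w⟫, and such that {x ∈ Ω : f(x) = 0} equals the topological frontier of Ω. Then there exist a ∈ EuclideanSpace ℝ (Fin n) and ρ > 0 such that Ω = Metric.closedBall a ρ and f(x) = (ρ² − ‖x − a‖²)/(2(n−1)) for all x ∈ Ω. -/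
open RealInnerProductSpace Metric Set Bornology

section Helpers

variable {E : Type*} [NormedAddCommGroup E] [NormedSpace ℝ E]

/-- A differentiable function with zero derivative on an open preconnected set is constant. -/
lemma const_of_fderiv_zero_on' {F : Type*} [NormedAddCommGroup F] [NormedSpace ℝ F]
    {g : E → F} (hg : Differentiable ℝ g) {U : Set E} (hU : IsOpen U)
    (hUc : IsPreconnected U) (h0 : ∀ x ∈ U, fderiv ℝ g x = 0)
    {x y : E} (hx : x ∈ U) (hy : y ∈ U) : g x = g y := by
  have loc : ∀ p ∈ U, ∃ ε > 0, ball p ε ⊆ U ∧ ∀ q ∈ ball p ε, g q = g p := by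
    intro p hp
    obtain ⟨ε, hε, hball⟩ := Metric.isOpen_iff.mp hU p hp
    refine ⟨ε, hε, hball, fun q hq => ?_⟩
    refine (convex_ball p ε).is_const_of_fderivWithin_eq_zero
      hg.differentiableOn (fun w hw => ?_) hq (mem_ball_self hε)
    rw [fderivWithin_of_isOpen isOpen_ball hw]
    exact h0 w (hball hw)
  by_contra hne
  set A : Set E := {p ∈ U | g p = g x} with hA
  set B : Set E := {p ∈ U | g p ≠ g x} with hB
  have hAo : IsOpen A := by
    rw [Metric.isOpen_iff]
    rintro p ⟨hpU, hpv⟩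
    obtain ⟨ε, hε, hbU, hconst⟩ := loc p hpU
    exact ⟨ε, hε, fun q hq => ⟨hbU hq, (hconst q hq).trans hpv⟩⟩
  have hBo : IsOpen B := by
    rw [Metric.isOpen_iff]
    rintro p ⟨hpU, hpv⟩
    obtain ⟨ε, hε, hbU, hconst⟩ := loc p hpU
    exact ⟨ε, hε, fun q hq => ⟨hbU hq, by rw [hconst q hq]; exact hpv⟩⟩
  obtain ⟨w, _, hwA, hwB⟩ := hUc A B hAo hBo
    (fun p hp => by by_cases h : g p = g x
                    · exact Or.inl ⟨hp, h⟩
                    · exact Or.inr ⟨hp, h⟩)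
    ⟨x, hx, hx, rfl⟩ ⟨y, hy, hy, fun h => hne h.symm⟩
  exact hwB.2 hwA.2

/-- Disjoint open balls with positive radii are at distance at least the sum of radii. -/
lemma balls_disjoint_dist' {a b : E} {r s : ℝ} (hr : 0 < r) (hs : 0 < s)
    (h : Disjoint (ball a r) (ball b s)) : r + s ≤ dist a b := by
  by_contra hlt
  push_neg at hlt
  have hrs : 0 < r + s := by linarith
  set p : E := a + (r / (r + s)) • (b - a) with hp
  have hd : dist a b = ‖b - a‖ := by rw [dist_eq_norm']
  have h1 : p ∈ ball a r := by
    rw [mem_ball, dist_eq_norm]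
    have : p - a = (r / (r + s)) • (b - a) := by rw [hp]; abel
    rw [this, norm_smul, Real.norm_eq_abs, abs_of_pos (by positivity)]
    calc r / (r + s) * ‖b - a‖ < r / (r + s) * (r + s) := by
          apply mul_lt_mul_of_pos_left _ (by positivity)
          rw [← hd]; exact hlt
      _ = r := by field_simp
  have h2 : p ∈ ball b s := by
    rw [mem_ball, dist_eq_norm]
    have hrt : r / (r + s) = 1 - s / (r + s) := by field_simp; ring
    have : p - b = -((s / (r + s)) • (b - a)) := by
      rw [hp, hrt]; module
    rw [this, norm_neg, norm_smul, Real.norm_eq_abs, abs_of_pos (by positivity)]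
    calc s / (r + s) * ‖b - a‖ < s / (r + s) * (r + s) := by
          apply mul_lt_mul_of_pos_left _ (by positivity)
          rw [← hd]; exact hlt
      _ = s := by field_simp
  exact Set.disjoint_left.mp h h1 h2

/-- On an open preconnected set where the second derivative is `-(1/ν)` times the metric,
the function is a quadratic ball potential. -/
lemma component_data {H : Type*} [NormedAddCommGroup H] [InnerProductSpace ℝ H] [CompleteSpace H]
    (ν : ℝ) (hν : 0 < ν) (f : H → ℝ) (hf : ContDiff ℝ 2 f)
    (S : Set H)
    (hHess : ∀ x ∈ S, ∀ v w : H, fderiv ℝ (fderiv ℝ f) x v w = -(1/ν) * ⟪v, w⟫)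
    (U : Set H) (hUo : IsOpen U) (hUc : IsPreconnected U) (hUS : U ⊆ S)
    (z : H) (hzU : z ∈ U) :
    ∃ a : H,
      (∀ x ∈ U, x + ν • (InnerProductSpace.toDual ℝ H).symm (fderiv ℝ f x) = a) ∧
      (∃ r2 : ℝ, ∀ x ∈ U, f x = (r2 - ‖x - a‖^2) / (2*ν)) := by
  have hdf : Differentiable ℝ f := hf.differentiable (by norm_num)
  have hc1 : ContDiff ℝ 1 (fderiv ℝ f) := hf.fderiv_right (by norm_num)
  have hd1 : Differentiable ℝ (fderiv ℝ f) := hc1.differentiable (by norm_num)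
  set a : H := z + ν • (InnerProductSpace.toDual ℝ H).symm (fderiv ℝ f z) with ha
  have hνne : ν ≠ 0 := ne_of_gt hν
  have hainner : ∀ v : H, ⟪a, v⟫ = ⟪z, v⟫ + ν * fderiv ℝ f z v := by
    intro v
    rw [ha, inner_add_left, real_inner_smul_left, InnerProductSpace.toDual_symm_apply]
  have h_fd : ∀ x ∈ U, ∀ v : H, fderiv ℝ f x v = (1/ν) * ⟪a - x, v⟫ := by
    intro x hxU v
    have hinp : ∀ p : H, DifferentiableAt ℝ (fun p : H => ⟪p, v⟫) p := by
      intro p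
      exact differentiableAt_fun_id.inner ℝ (differentiableAt_const v)
    have hgdiff : Differentiable ℝ (fun p : H => ν * fderiv ℝ f p v + ⟪p, v⟫) :=
      ((hd1.clm_apply (differentiable_const v)).const_mul _).add (fun p => hinp p)
    have h0 : ∀ p ∈ U, fderiv ℝ (fun p : H => ν * fderiv ℝ f p v + ⟪p, v⟫) p = 0 := by
      intro p hp
      have hA : DifferentiableAt ℝ (fun p : H => fderiv ℝ f p v) p :=
        (hd1 p).clm_apply (differentiableAt_const v)
      ext w
      rw [fderiv_fun_add (hA.const_mul _) (hinp p)]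
      have e1 : fderiv ℝ (fun p : H => ν * fderiv ℝ f p v) p w
          = ν * fderiv ℝ (fderiv ℝ f) p w v := by
        rw [fderiv_const_mul hA]
        simp only [ContinuousLinearMap.coe_smul', Pi.smul_apply, smul_eq_mul]
        rw [fderiv_clm_apply (hd1 p) (differentiableAt_const v)]
        simp
      have e2 : fderiv ℝ (fun p : H => ⟪p, v⟫) p w = ⟪w, v⟫ := by
        rw [fderiv_inner_apply ℝ differentiableAt_fun_id (differentiableAt_const v)]
        simp
      simp only [ContinuousLinearMap.add_apply, e1, e2, ContinuousLinearMap.zero_apply]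
      rw [hHess p (hUS hp) w v]
      field_simp
      ring
    have hcst := const_of_fderiv_zero_on' hgdiff hUo hUc h0 hxU hzU
    have hav := hainner v
    rw [inner_sub_left]
    field_simp
    linarith [hcst, hav]
  refine ⟨a, ?_, ?_⟩
  · intro x hx
    have hgrad : (InnerProductSpace.toDual ℝ H).symm (fderiv ℝ f x) = (1/ν) • (a - x) := by
      apply ext_inner_right ℝ
      intro v
      rw [InnerProductSpace.toDual_symm_apply, real_inner_smul_left]
      exact h_fd x hx v
    rw [hgrad, smul_smul, mul_one_div, div_self hνne, one_smul]
    abel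
  · set q : H → ℝ := fun p => 2*ν*(f p) + ⟪p, p⟫ - 2*⟪a, p⟫ with hq
    have hin1 : ∀ x : H, DifferentiableAt ℝ (fun p : H => ⟪p, p⟫) x := by
      intro x
      exact differentiableAt_fun_id.inner ℝ differentiableAt_fun_id
    have hin2 : ∀ x : H, DifferentiableAt ℝ (fun p : H => ⟪a, p⟫) x := by
      intro x
      exact (differentiableAt_const a).inner ℝ differentiableAt_fun_id
    have hin1' : Differentiable ℝ (fun p : H => ⟪p, p⟫) := fun x => hin1 x
    have hin2' : Differentiable ℝ (fun p : H => ⟪a, p⟫) := fun x => hin2 x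
    have hqdiff : Differentiable ℝ q :=
      ((hdf.const_mul _).add hin1').sub (hin2'.const_mul _)
    have hq0 : ∀ x ∈ U, fderiv ℝ q x = 0 := by
      intro x hx
      have hA : DifferentiableAt ℝ (fun p : H => 2*ν*(f p) + ⟪p, p⟫) x :=
        ((hdf x).const_mul _).add (hin1 x)
      have hB : DifferentiableAt ℝ (fun p : H => 2*⟪a, p⟫) x :=
        (hin2 x).const_mul _
      ext w
      rw [hq]
      rw [fderiv_fun_sub hA hB, fderiv_fun_add ((hdf x).const_mul _) (hin1 x)]
      have e0 : fderiv ℝ (fun p : H => 2*ν*(f p)) x w = 2*ν*(fderiv ℝ f x w) := by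
        rw [fderiv_const_mul (hdf x)]
        simp
      have e1 : fderiv ℝ (fun p : H => ⟪p, p⟫) x w = 2*⟪x, w⟫ := by
        rw [fderiv_inner_apply ℝ differentiableAt_fun_id differentiableAt_fun_id]
        simp only [fderiv_id', ContinuousLinearMap.coe_id', id_eq]
        rw [real_inner_comm w x]
        ring
      have e2 : fderiv ℝ (fun p : H => 2*⟪a, p⟫) x w = 2*⟪a, w⟫ := by
        rw [fderiv_const_mul (hin2 x)]
        simp only [ContinuousLinearMap.coe_smul', Pi.smul_apply, smul_eq_mul]
        rw [fderiv_inner_apply ℝ (differentiableAt_const a) differentiableAt_fun_id]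
        simp
      simp only [ContinuousLinearMap.sub_apply, ContinuousLinearMap.add_apply,
        ContinuousLinearMap.zero_apply, e0, e1, e2]
      rw [h_fd x hx w, inner_sub_left]
      field_simp
      ring
    obtain ⟨Qz, hQz⟩ : ∃ c : ℝ, q z = c := ⟨q z, rfl⟩
    refine ⟨Qz + ⟪a, a⟫, ?_⟩
    intro x hx
    have hcst : q x = Qz :=
      (const_of_fderiv_zero_on' hqdiff hUo hUc hq0 hx hzU).trans hQz
    have hns : ‖x - a‖^2 = ⟪x, x⟫ - 2*⟪a, x⟫ + ⟪a, a⟫ := by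
      rw [norm_sub_sq_real, ← real_inner_self_eq_norm_sq, ← real_inner_self_eq_norm_sq,
        real_inner_comm x a]
    simp only [hq] at hcst
    rw [hns, eq_div_iff (by positivity : (2*ν) ≠ 0)]
    linear_combination hcst

/-- An open bounded set carrying a ball potential vanishing exactly on its frontier is a ball. -/
lemma ball_structure' {H : Type*} [NormedAddCommGroup H] [NormedSpace ℝ H]
    [ProperSpace H] [Nontrivial H]
    (U : Set H) (hUo : IsOpen U) (hUbd : IsBounded U)
    (z : H) (hzU : z ∈ U)
    (a : H) (r2 ν : ℝ) (hν : 0 < ν) (g : H → ℝ)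
    (hgcl : ∀ x ∈ closure U, g x = (r2 - ‖x - a‖^2)/(2*ν))
    (hgfront : ∀ x ∈ frontier U, g x = 0)
    (hgne : ∀ x ∈ U, g x ≠ 0) :
    ∃ ρ : ℝ, 0 < ρ ∧ r2 = ρ^2 ∧ U = ball a ρ ∧ closure U = closedBall a ρ := by
  have h2ν : (2*ν) ≠ 0 := by positivity
  have hK : IsCompact (closure U) := hUbd.isCompact_closure
  obtain ⟨m, hmK, hmax'⟩ := hK.exists_isMaxOn ⟨z, subset_closure hzU⟩
    ((continuous_id.sub continuous_const).norm.continuousOn)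
  have hmax : ∀ y ∈ closure U, ‖y - a‖ ≤ ‖m - a‖ := fun y hy => hmax' hy
  set ρ : ℝ := ‖m - a‖ with hρdef
  have hUbig : ¬ (U ⊆ {a}) := by
    intro hsub
    obtain ⟨ε, hε, hball⟩ := Metric.isOpen_iff.mp hUo z hzU
    obtain ⟨w₀, hw₀⟩ := exists_ne (0 : H)
    set p : H := z + ((ε/2)/‖w₀‖) • w₀ with hp
    have hw₀n : 0 < ‖w₀‖ := norm_pos_iff.mpr hw₀
    have hpz : p ≠ z := by
      intro h
      rw [hp] at h
      have : ((ε/2)/‖w₀‖) • w₀ = 0 := by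
        have := sub_eq_zero.mpr h
        simpa using this
      rcases smul_eq_zero.mp this with h' | h'
      · have : (ε/2)/‖w₀‖ ≠ 0 := by positivity
        exact this h'
      · exact hw₀ h'
    have hpU : p ∈ U := by
      apply hball
      rw [mem_ball, dist_eq_norm, hp]
      have : z + ((ε/2)/‖w₀‖) • w₀ - z = ((ε/2)/‖w₀‖) • w₀ := by abel
      rw [this, norm_smul, Real.norm_eq_abs, abs_of_pos (by positivity)]
      rw [div_mul_cancel₀]
      · linarith
      · exact ne_of_gt hw₀n
    have h1 : p = a := hsub hpU
    have h2 : z = a := hsub hzU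
    exact hpz (h1.trans h2.symm)
  have hρpos : 0 < ρ := by
    rcases lt_or_ge 0 ρ with h | h
    · exact h
    · exfalso
      apply hUbig
      intro y hy
      have : ‖y - a‖ ≤ ρ := hmax y (subset_closure hy)
      have : ‖y - a‖ = 0 := le_antisymm (this.trans h) (norm_nonneg _)
      rw [norm_sub_eq_zero_iff] at this
      exact this
  have hmU : m ∉ U := by
    intro hmUmem
    obtain ⟨ε, hε, hball⟩ := Metric.isOpen_iff.mp hUo m hmUmem
    set m' : H := m + ((ε/2)/ρ) • (m - a) with hm'
    have hm'U : m' ∈ U := by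
      apply hball
      rw [mem_ball, dist_eq_norm, hm']
      have : m + ((ε/2)/ρ) • (m - a) - m = ((ε/2)/ρ) • (m - a) := by abel
      rw [this, norm_smul, Real.norm_eq_abs, abs_of_pos (by positivity), ← hρdef]
      rw [div_mul_cancel₀]
      · linarith
      · exact ne_of_gt hρpos
    have : ‖m' - a‖ ≤ ρ := hmax m' (subset_closure hm'U)
    have hgt : ‖m' - a‖ = ρ + ε/2 := by
      have e : m' - a = (1 + (ε/2)/ρ) • (m - a) := by
        rw [hm', add_smul, one_smul]
        abel
      rw [e, norm_smul, Real.norm_eq_abs, abs_of_pos (by positivity), ← hρdef]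
      field_simp
    linarith
  have hmfront : m ∈ frontier U := by
    rw [hUo.frontier_eq]
    exact ⟨hmK, hmU⟩
  have hr2 : r2 = ρ^2 := by
    have h0 := hgfront m hmfront
    rw [hgcl m hmK] at h0
    rw [div_eq_zero_iff] at h0
    rcases h0 with h0 | h0
    · linarith
    · exact absurd h0 h2ν
  have hfrnorm : ∀ x ∈ frontier U, ‖x - a‖ = ρ := by
    intro x hx
    have h0 := hgfront x hx
    rw [hgcl x (hx.1 : x ∈ closure U)] at h0
    rw [div_eq_zero_iff] at h0
    rcases h0 with h0 | h0
    · rw [hr2] at h0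
      have h1 : ‖x - a‖ ≤ ρ := by nlinarith [norm_nonneg (x - a)]
      have h2 : ρ ≤ ‖x - a‖ := by nlinarith [norm_nonneg (x - a)]
      linarith
    · exact absurd h0 h2ν
  have hUsubball : U ⊆ ball a ρ := by
    intro x hx
    rw [mem_ball, dist_eq_norm]
    have h1 : ‖x - a‖ ≤ ρ := hmax x (subset_closure hx)
    rcases lt_or_eq_of_le h1 with h | h
    · exact h
    · exfalso
      apply hgne x hx
      rw [hgcl x (subset_closure hx), hr2, h]
      simp
  have hUball : U = ball a ρ := by
    apply Subset.antisymm hUsubball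
    have hsub2 : ball a ρ ∩ closure U ⊆ U := by
      rintro x ⟨hxb, hxc⟩
      by_contra hxU
      have : x ∈ frontier U := by rw [hUo.frontier_eq]; exact ⟨hxc, hxU⟩
      have := hfrnorm x this
      rw [mem_ball, dist_eq_norm] at hxb
      rw [this] at hxb
      exact lt_irrefl _ hxb
    by_contra hno
    rw [Set.not_subset] at hno
    obtain ⟨p, hpb, hpU⟩ := hno
    have hpc : p ∉ closure U := fun hc => hpU (hsub2 ⟨hpb, hc⟩)
    obtain ⟨w, -, hwU, hwc⟩ := (convex_ball a ρ).isPreconnected U (closure U)ᶜ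
      hUo isClosed_closure.isOpen_compl
      (fun x hx => by
        by_cases h : x ∈ closure U
        · exact Or.inl (hsub2 ⟨hx, h⟩)
        · exact Or.inr h)
      ⟨z, hUsubball hzU, hzU⟩
      ⟨p, hpb, hpc⟩
    exact hwc (subset_closure hwU)
  have hclosure : closure U = closedBall a ρ := by
    rw [hUball]
    exact closure_ball a (ne_of_gt hρpos)
  exact ⟨ρ, hρpos, hr2, hUball, hclosure⟩

end Helpers


/-- Euclidean case of Miao–Tam's rigidity theorem: a compact connected domain
(equal to the closure of its nonempty interior) carrying a `C²` solution of the flat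
Miao–Tam equation whose zero set within the domain is exactly the boundary must be a
closed ball, with `f` the model quadratic potential. -/
theorem stmt_7 (n : ℕ) (hn : 3 ≤ n) (Ω : Set (EuclideanSpace ℝ (Fin n)))
    (hΩcpt : IsCompact Ω) (hΩconn : IsConnected Ω)
    (hΩreg : Ω = closure (interior Ω)) (hΩint : (interior Ω).Nonempty)
    (f : EuclideanSpace ℝ (Fin n) → ℝ) (hf : ContDiff ℝ 2 f)
    (heq : ∀ x ∈ Ω, ∀ v w : EuclideanSpace ℝ (Fin n),
      Hess f x v w - lap f x * ⟪v, w⟫ = ⟪v, w⟫)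
    (hbd : {x ∈ Ω | f x = 0} = frontier Ω) :
    ∃ (a : EuclideanSpace ℝ (Fin n)) (ρ : ℝ), 0 < ρ ∧
      Ω = Metric.closedBall a ρ ∧
      ∀ x ∈ Ω, f x = (ρ ^ 2 - ‖x - a‖ ^ 2) / (2 * ((n : ℝ) - 1)) := by
  haveI : Nonempty (Fin n) := ⟨⟨0, by omega⟩⟩
  haveI : Nontrivial (EuclideanSpace ℝ (Fin n)) := inferInstance
  set ν : ℝ := (n:ℝ) - 1 with hνdef
  have hν : (0:ℝ) < ν := by
    have : (3:ℝ) ≤ (n:ℝ) := by exact_mod_cast hn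
    rw [hνdef]; linarith
  have hνne : ν ≠ 0 := ne_of_gt hν
  -- Step 1: the Hessian is `-(1/ν)` times the inner product on Ω
  have hHess : ∀ x ∈ Ω, ∀ v w : EuclideanSpace ℝ (Fin n),
      fderiv ℝ (fderiv ℝ f) x v w = -(1/ν) * ⟪v, w⟫ := by
    intro x hx v w
    have hlap : lap f x * (1 - (n:ℝ)) = n := by
      have h1 : ∀ i : Fin n, Hess f x (EuclideanSpace.single i 1) (EuclideanSpace.single i 1)
          = 1 + lap f x := by
        intro i
        have h := heq x hx (EuclideanSpace.single i 1) (EuclideanSpace.single i 1)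
        have hinner : ⟪(EuclideanSpace.single i (1:ℝ) : EuclideanSpace ℝ (Fin n)),
            EuclideanSpace.single i 1⟫ = 1 := by
          rw [EuclideanSpace.inner_single_left]
          simp [EuclideanSpace.single_apply]
        rw [hinner] at h
        linarith
      have h2 : lap f x = ∑ _i : Fin n, (1 + lap f x) := by
        rw [lap]
        exact Finset.sum_congr rfl (fun i _ => h1 i)
      rw [Finset.sum_const, Finset.card_univ, Fintype.card_fin, nsmul_eq_mul] at h2
      nlinarith [h2]
    have h := heq x hx v w
    have hH2 : Hess f x v w = fderiv ℝ (fderiv ℝ f) x v w := by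
      rw [Hess, iteratedFDeriv_two_apply]
      simp
    rw [hH2] at h
    have hne : (1:ℝ) - n ≠ 0 := by
      rw [hνdef] at hν; linarith
    have hlap' : lap f x = (n:ℝ) / (1 - n) := by
      field_simp
      linarith [hlap]
    rw [hlap'] at h
    rw [hνdef]
    field_simp at h ⊢
    have hn1 : (n:ℝ) - 1 ≠ 0 := ne_of_gt (by linarith)
    rw [← neg_div, eq_div_iff hn1]
    linear_combination -h
  -- basic facts
  have hΩcl : IsClosed Ω := hΩcpt.isClosed
  have hc1 : ContDiff ℝ 1 (fderiv ℝ f) := hf.fderiv_right (by norm_num)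
  -- the "center" map
  set ψ : EuclideanSpace ℝ (Fin n) → EuclideanSpace ℝ (Fin n) :=
    fun x => x + ν • (InnerProductSpace.toDual ℝ (EuclideanSpace ℝ (Fin n))).symm (fderiv ℝ f x)
    with hψdef
  have hψcont : Continuous ψ := by
    apply continuous_id.add
    exact ((InnerProductSpace.toDual ℝ
      (EuclideanSpace ℝ (Fin n))).symm.continuous.comp hc1.continuous).const_smul ν
  -- Step 2+3: structure of each connected component of the interior
  have key : ∀ z ∈ interior Ω, ∃ (a : EuclideanSpace ℝ (Fin n)) (ρ : ℝ), 0 < ρ ∧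
      connectedComponentIn (interior Ω) z = Metric.ball a ρ ∧
      (∀ x ∈ connectedComponentIn (interior Ω) z, ψ x = a) ∧
      (∀ x ∈ Metric.closedBall a ρ, f x = (ρ^2 - ‖x - a‖^2) / (2*ν)) := by
    intro z hz
    set U : Set (EuclideanSpace ℝ (Fin n)) := connectedComponentIn (interior Ω) z with hU
    have hUo : IsOpen U := isOpen_interior.connectedComponentIn
    have hUc : IsPreconnected U := isPreconnected_connectedComponentIn
    have hUsub : U ⊆ interior Ω := connectedComponentIn_subset _ _
    have hzU : z ∈ U := mem_connectedComponentIn hz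
    have hUΩ : closure U ⊆ Ω := by
      rw [hΩreg]
      exact closure_mono hUsub
    obtain ⟨a, hψa, r2, hfU⟩ := component_data ν hν f hf Ω hHess U hUo hUc
      (fun x hx => interior_subset (hUsub hx)) z hzU
    -- extend the formula to the closure
    have hmodelcont : Continuous
        (fun x : EuclideanSpace ℝ (Fin n) => (r2 - ‖x - a‖^2)/(2*ν)) := by
      apply Continuous.div_const
      exact continuous_const.sub (((continuous_id.sub continuous_const).norm).pow 2)
    have hfcl : ∀ x ∈ closure U, f x = (r2 - ‖x - a‖^2)/(2*ν) := by
      have hEq : Set.EqOn f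
          (fun x : EuclideanSpace ℝ (Fin n) => (r2 - ‖x - a‖^2)/(2*ν)) U :=
        fun x hx => hfU x hx
      exact fun x hx => (hEq.closure hf.continuous hmodelcont) hx
    -- frontier facts
    have hclint : closure U ∩ interior Ω ⊆ U := by
      rintro x ⟨hxc, hxi⟩
      have hVo : IsOpen (connectedComponentIn (interior Ω) x) :=
        isOpen_interior.connectedComponentIn
      have hxV : x ∈ connectedComponentIn (interior Ω) x := mem_connectedComponentIn hxi
      obtain ⟨u, huV, huU⟩ := (_root_.mem_closure_iff.mp hxc) _ hVo hxV
      have e1 := connectedComponentIn_eq huV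
      have e2 := connectedComponentIn_eq huU
      show x ∈ connectedComponentIn (interior Ω) z
      rw [e2, ← e1]
      exact hxV
    have hfrontU : frontier U ⊆ frontier Ω := by
      intro x hx
      rw [hUo.frontier_eq] at hx
      rw [hΩcl.frontier_eq]
      exact ⟨hUΩ hx.1, fun hxi => hx.2 (hclint ⟨hx.1, hxi⟩)⟩
    have hf0front : ∀ x ∈ frontier U, f x = 0 := by
      intro x hx
      have : x ∈ {x ∈ Ω | f x = 0} := by rw [hbd]; exact hfrontU hx
      exact this.2
    have hfne : ∀ x ∈ U, f x ≠ 0 := by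
      intro x hx h0
      have h1 : x ∈ frontier Ω := by
        rw [← hbd]
        exact ⟨interior_subset (hUsub hx), h0⟩
      rw [hΩcl.frontier_eq] at h1
      exact h1.2 (hUsub hx)
    have hUbd : IsBounded U :=
      hΩcpt.isBounded.subset (fun x hx => interior_subset (hUsub hx))
    obtain ⟨ρ, hρpos, hr2, hUball, hclball⟩ :=
      ball_structure' U hUo hUbd z hzU a r2 ν hν f hfcl hf0front hfne
    refine ⟨a, ρ, hρpos, hUball, hψa, ?_⟩
    intro x hx
    rw [← hclball] at hx
    rw [hfcl x hx, hr2]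
  -- Step 4: assembly
  obtain ⟨z₀, hz₀⟩ := hΩint
  obtain ⟨a₀, ρ₀, hρ₀, hU₀, hψ₀, hf₀⟩ := key z₀ hz₀
  have hU₀cl : closure (connectedComponentIn (interior Ω) z₀) ⊆ Ω := by
    intro x hx
    have hx' := closure_mono (connectedComponentIn_subset (interior Ω) z₀) hx
    rw [hΩreg]
    exact hx'
  have hclb : closure (connectedComponentIn (interior Ω) z₀) = Metric.closedBall a₀ ρ₀ := by
    rw [hU₀]
    exact closure_ball a₀ (ne_of_gt hρ₀)
  have hB0Ω : Metric.closedBall a₀ ρ₀ ⊆ Ω := by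
    rw [← hclb]; exact hU₀cl
  have hz₀B : z₀ ∈ Metric.closedBall a₀ ρ₀ := by
    rw [← hclb]
    exact subset_closure (mem_connectedComponentIn hz₀)
  have hψcl : ∀ x ∈ Metric.closedBall a₀ ρ₀, ψ x = a₀ := by
    have hEq : Set.EqOn ψ (fun _ => a₀) (connectedComponentIn (interior Ω) z₀) :=
      fun p hp => hψ₀ p hp
    intro x hx
    rw [← hclb] at hx
    exact (hEq.closure hψcont continuous_const) hx
  have hΩeq : Ω = Metric.closedBall a₀ ρ₀ := by
    apply Subset.antisymm _ hB0Ω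
    by_contra hno
    rw [Set.not_subset] at hno
    obtain ⟨w₁, hw₁Ω, hw₁B⟩ := hno
    -- use connectedness of Ω
    obtain ⟨x, hxΩ, hxB, hxT⟩ := isPreconnected_closed_iff.mp hΩconn.isPreconnected
      (Metric.closedBall a₀ ρ₀) (closure (Ω \ Metric.closedBall a₀ ρ₀))
      Metric.isClosed_closedBall isClosed_closure
      (fun y hy => by
        by_cases h : y ∈ Metric.closedBall a₀ ρ₀
        · exact Or.inl h
        · exact Or.inr (subset_closure ⟨hy, h⟩))
      ⟨z₀, interior_subset hz₀, hz₀B⟩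
      ⟨w₁, hw₁Ω, subset_closure ⟨hw₁Ω, hw₁B⟩⟩
    have hψx : ψ x = a₀ := hψcl x hxB
    -- continuity of ψ at x
    obtain ⟨δ, hδ, hcont⟩ := Metric.continuousAt_iff.mp hψcont.continuousAt ρ₀ hρ₀
    -- pick a point of Ω \ B near x
    obtain ⟨w', hw'mem, hdxw'⟩ := Metric.mem_closure_iff.mp hxT (δ/2) (by positivity)
    have hw'B : ρ₀ < dist w' a₀ := by
      have := hw'mem.2
      rwa [Metric.mem_closedBall, not_le] at this
    have hηpos : 0 < min (δ/2) ((dist w' a₀ - ρ₀)/2) :=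
      lt_min (by positivity) (by linarith)
    have hw'cl : w' ∈ closure (interior Ω) := by rw [← hΩreg]; exact hw'mem.1
    obtain ⟨z, hzint, hdw'z⟩ := Metric.mem_closure_iff.mp hw'cl _ hηpos
    have h2 : dist w' z < (dist w' a₀ - ρ₀)/2 := lt_of_lt_of_le hdw'z (min_le_right _ _)
    have h2' : dist w' z < δ/2 := lt_of_lt_of_le hdw'z (min_le_left _ _)
    have hzB : z ∉ Metric.closedBall a₀ ρ₀ := by
      rw [Metric.mem_closedBall, not_le]
      have h1 : dist w' a₀ ≤ dist w' z + dist z a₀ := dist_triangle _ _ _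
      linarith
    have hdzx : dist z x < δ := by
      have h1 : dist z x ≤ dist z w' + dist w' x := dist_triangle _ _ _
      have h3 : dist w' x < δ/2 := by rw [dist_comm]; exact hdxw'
      have h4 : dist z w' < δ/2 := by rw [dist_comm]; exact h2'
      linarith
    have hψz : dist (ψ z) a₀ < ρ₀ := by
      have := hcont hdzx
      rwa [hψx] at this
    obtain ⟨a₁, ρ₁, hρ₁, hU₁, hψ₁, -⟩ := key z hzint
    have hψza : ψ z = a₁ := hψ₁ z (mem_connectedComponentIn hzint)
    have hdisj : Disjoint (connectedComponentIn (interior Ω) z)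
        (connectedComponentIn (interior Ω) z₀) := by
      by_contra hnd
      obtain ⟨y, hy1, hy0⟩ := Set.not_disjoint_iff.mp hnd
      have e1 := connectedComponentIn_eq hy1
      have e2 := connectedComponentIn_eq hy0
      have hz' : z ∈ connectedComponentIn (interior Ω) z₀ := by
        rw [e2, ← e1]
        exact mem_connectedComponentIn hzint
      rw [hU₀] at hz'
      exact hzB (Metric.ball_subset_closedBall hz')
    rw [hU₁, hU₀] at hdisj
    have hsum := balls_disjoint_dist' hρ₁ hρ₀ hdisj
    rw [← hψza] at hsum
    linarith
  refine ⟨a₀, ρ₀, hρ₀, hΩeq, ?_⟩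
  intro x hx
  rw [hΩeq] at hx
  exact hf₀ x hx
end

section
/- Let A be a real symmetric 3×3 matrix with trace A = 0. Then trace(A³) ≥ −(1/√6)·(trace(A²))^{3/2}. -/
open Matrix in
lemma pow_conj_diag (U : Matrix (Fin 3) (Fin 3) ℝ) (hU : star U * U = 1)
    (f : Fin 3 → ℝ) (k : ℕ) :
    (U * diagonal f * star U) ^ k = U * diagonal (fun i => f i ^ k) * star U := by
  have hU' : U * star U = 1 := mul_eq_one_comm.mp hU
  induction k with
  | zero => simp [hU']
  | succ n ih =>
    rw [pow_succ, ih]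
    simp only [Matrix.mul_assoc]
    rw [← Matrix.mul_assoc (star U) U, hU, Matrix.one_mul,
      ← Matrix.mul_assoc (diagonal fun i => f i ^ n), Matrix.diagonal_mul_diagonal]
    congr 2

open Matrix in
lemma trace_pow_eq_sum (A : Matrix (Fin 3) (Fin 3) ℝ) (hH : A.IsHermitian) (k : ℕ) :
    (A ^ k).trace = ∑ i, hH.eigenvalues i ^ k := by
  have hU : star (hH.eigenvectorUnitary : Matrix (Fin 3) (Fin 3) ℝ) *
      (hH.eigenvectorUnitary : Matrix (Fin 3) (Fin 3) ℝ) = 1 :=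
    (Matrix.mem_unitaryGroup_iff').mp hH.eigenvectorUnitary.2
  conv_lhs => rw [hH.spectral_theorem]
  have hf : diagonal (RCLike.ofReal ∘ hH.eigenvalues) = diagonal hH.eigenvalues := by
    congr 1
  rw [hf, Unitary.conjStarAlgAut_apply, pow_conj_diag _ hU, Matrix.trace_mul_cycle, hU,
    Matrix.one_mul, Matrix.trace_diagonal]

lemma cubic_ineq (a b : ℝ) :
    6 * (a ^ 3 + b ^ 3 + (-a - b) ^ 3) ^ 2 ≤ (a ^ 2 + b ^ 2 + (-a - b) ^ 2) ^ 3 := by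
  nlinarith [sq_nonneg (a - b), sq_nonneg (a + 2*b), sq_nonneg (2*a + b),
    sq_nonneg ((a-b)*(a+2*b)*(2*a+b)), sq_nonneg (a+b), sq_nonneg (a*b), sq_nonneg (a^2 - b^2)]

/-- Okumura's lemma in dimension three: a real symmetric traceless `3 × 3` matrix
satisfies `trace(A³) ≥ −(1/√6)·(trace(A²))^{3/2}`. -/
theorem stmt_8 (A : Matrix (Fin 3) (Fin 3) ℝ) (hA : A.IsSymm) (h0 : A.trace = 0) :
    (A ^ 3).trace ≥ -(1 / Real.sqrt 6) * ((A ^ 2).trace) ^ ((3 : ℝ) / 2) := by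
  have hH : A.IsHermitian := by
    rwa [Matrix.IsHermitian, Matrix.conjTranspose_eq_transpose_of_trivial]
  set a := hH.eigenvalues 0 with ha
  set b := hH.eigenvalues 1 with hb
  set c := hH.eigenvalues 2 with hc0
  have h1 : (A ^ 1).trace = a + b + c := by
    rw [trace_pow_eq_sum A hH 1]; simp [Fin.sum_univ_three]; rfl
  rw [pow_one] at h1
  have hsum : a + b + c = 0 := by rw [← h1, h0]
  have h2 : (A ^ 2).trace = a ^ 2 + b ^ 2 + c ^ 2 := by
    rw [trace_pow_eq_sum A hH 2]; simp [Fin.sum_univ_three]; rfl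
  have h3 : (A ^ 3).trace = a ^ 3 + b ^ 3 + c ^ 3 := by
    rw [trace_pow_eq_sum A hH 3]; simp [Fin.sum_univ_three]; rfl
  set s := a ^ 2 + b ^ 2 + c ^ 2 with hsdef
  set t := a ^ 3 + b ^ 3 + c ^ 3 with htdef
  have hs0 : (0:ℝ) ≤ s := by positivity
  clear_value a b c
  clear_value s t
  have key : 6 * t ^ 2 ≤ s ^ 3 := by
    have hc : c = -a - b := by linarith
    rw [htdef, hsdef, hc]
    exact cubic_ineq a b
  have hr : s ^ ((3:ℝ)/2) = Real.sqrt (s ^ 3) := by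
    rw [Real.sqrt_eq_rpow, ← Real.rpow_natCast s 3, ← Real.rpow_mul hs0]
    norm_num
  rw [h2, h3, hr]
  have h6 : (0:ℝ) < Real.sqrt 6 := Real.sqrt_pos.mpr (by norm_num)
  have habs : |t| ≤ Real.sqrt (s ^ 3) / Real.sqrt 6 := by
    rw [← Real.sqrt_sq_eq_abs, ← Real.sqrt_div (by positivity : (0:ℝ) ≤ s ^ 3)]
    exact Real.sqrt_le_sqrt (by linarith)
  have heq : -(1 / Real.sqrt 6) * Real.sqrt (s ^ 3) = -(Real.sqrt (s ^ 3) / Real.sqrt 6) := by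
    ring
  rw [ge_iff_le, heq]
  linarith [neg_abs_le t, habs]
end
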